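/- Let r > 5δ > 0, let X and Y be δ-intrinsic metric spaces, and let f : X → Y be a map such that f(X) is a δ-net in Y and |d_Y(f(x),f(y)) − d_X(x,y)| < δ whenever min{d_X(x,y), d_Y(f(x),f(y))} < r. Then there is a universal constant C such that f is a (1 + C r^{-1} δ, Cδ)-quasi-isometry. -/

import Mathlib

/-- `X` is `δ`-intrinsic: every pair of points is joined by a `δ`-straight `δ`-chain. -/
def DeltaIntrinsic (X : Type*) [MetricSpace X] (δ : ℝ) : Prop :=
  ∀ x y : X, ∃ (N : ℕ) (c : ℕ → X), 1 ≤ N ∧ c 0 = x ∧ c N = y ∧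
    (∀ i < N, dist (c i) (c (i + 1)) < δ) ∧
    (∀ i j k : ℕ, i < j → j < k → k ≤ N →
      dist (c i) (c j) + dist (c j) (c k) < dist (c i) (c k) + δ)

private lemma exists_cross {Z : Type*} [MetricSpace Z] (c : ℕ → Z) (z : Z) (N : ℕ)
    (t δ : ℝ) (hδ : 0 < δ) (h0 : dist z (c 0) < t) (hN : t + δ ≤ dist z (c N))
    (hstep : ∀ i < N, dist (c i) (c (i + 1)) < δ) :
    ∃ i, 0 < i ∧ i < N ∧ t ≤ dist z (c i) ∧ dist z (c i) < t + δ := by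
  classical
  have hex : ∃ i, t ≤ dist z (c i) := ⟨N, by linarith⟩
  have hspec := Nat.find_spec hex
  have hle : Nat.find hex ≤ N := Nat.find_le (by linarith)
  have hpos : 0 < Nat.find hex := by
    rcases Nat.eq_zero_or_pos (Nat.find hex) with h | h
    · rw [h] at hspec; linarith
    · exact h
  obtain ⟨j, hj⟩ : ∃ j, Nat.find hex = j + 1 :=
    ⟨Nat.find hex - 1, (Nat.succ_pred_eq_of_pos hpos).symm⟩
  have hjlt : dist z (c j) < t := by
    have := Nat.find_min hex (m := j) (by omega)
    linarith [not_le.mp this]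
  have hjN : j < N := by omega
  have hub : dist z (c (Nat.find hex)) < t + δ := by
    rw [hj]
    calc dist z (c (j + 1)) ≤ dist z (c j) + dist (c j) (c (j + 1)) := dist_triangle _ _ _
    _ < t + δ := by have := hstep j hjN; linarith
  have hiN : Nat.find hex < N := by
    rcases lt_or_eq_of_le hle with h | h
    · exact h
    · rw [h] at hub; linarith
  exact ⟨Nat.find hex, hpos, hiN, hspec, hub⟩


/-- **Almost isometric at small scale implies quasi-isometric.**
There is a universal constant `C` such that: whenever `r > 5δ > 0`, `X` and `Y` are
`δ`-intrinsic metric spaces, and `f : X → Y` is a map such that `f(X)` is a `δ`-net in `Y`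
and `|d(f x, f y) − d(x, y)| < δ` whenever `min{d(x,y), d(f x, f y)} < r`, then `f` is a
`(1 + C r⁻¹ δ, Cδ)`-quasi-isometry. -/
theorem stmt7 : ∃ C : ℝ, 0 < C ∧
    ∀ (X Y : Type) [MetricSpace X] [MetricSpace Y] (r δ : ℝ), 0 < δ → 5 * δ < r →
    DeltaIntrinsic X δ → DeltaIntrinsic Y δ →
    ∀ f : X → Y,
      (∀ y : Y, ∃ x : X, dist (f x) y ≤ δ) →
      (∀ x y : X, min (dist x y) (dist (f x) (f y)) < r →
        |dist (f x) (f y) - dist x y| < δ) →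
      (∀ y : Y, ∃ x : X, dist (f x) y ≤ C * δ) ∧
      (∀ x y : X, (1 + C * r⁻¹ * δ)⁻¹ * dist x y - C * δ < dist (f x) (f y) ∧
        dist (f x) (f y) < (1 + C * r⁻¹ * δ) * dist x y + C * δ) := by
  refine ⟨100, by norm_num, ?_⟩
  intro X Y _ _ r δ hδ hr hX hY f hnet hloc
  have hrpos : 0 < r := by linarith
  -- Claim A : upper-type bound
  have hA : ∀ n : ℕ, ∀ x y : X, dist x y < n * (r / 10) →
      dist (f x) (f y) ≤ dist x y + (4 * n + 1) * δ := by
    intro n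
    induction n with
    | zero =>
      intro x y h
      norm_num at h
      linarith [dist_nonneg (x := x) (y := y)]
    | succ n ih =>
      intro x y h
      have hn0 : (0:ℝ) ≤ (n:ℝ) := n.cast_nonneg
      by_cases hcase : dist x y < r
      · have hm := abs_lt.mp (hloc x y (min_lt_iff.mpr (Or.inl hcase)))
        push_cast
        nlinarith [hm.2]
      · push_neg at hcase
        obtain ⟨N, c, hN1, hc0, hcN, hstep, hstr⟩ := hX x y
        have h0 : dist x (c 0) < r / 3 := by rw [hc0, dist_self]; linarith
        have hN' : r / 3 + δ ≤ dist x (c N) := by rw [hcN]; linarith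
        obtain ⟨i, hi0, hiN, hti, htub⟩ := exists_cross c x N (r / 3) δ hδ h0 hN' hstep
        have hstr' := hstr 0 i N hi0 hiN le_rfl
        rw [hc0, hcN] at hstr'
        have hxz_r : dist x (c i) < r := by linarith
        have hfxz : dist (f x) (f (c i)) < dist x (c i) + δ := by
          have := abs_lt.mp (hloc x (c i) (min_lt_iff.mpr (Or.inl hxz_r)))
          linarith [this.2]
        have hzy : dist (c i) y < n * (r / 10) := by
          have hn : dist x y < ((n:ℝ) + 1) * (r / 10) := by push_cast at h; linarith
          linarith
        have hih := ih (c i) y hzy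
        have htri := dist_triangle (f x) (f (c i)) (f y)
        push_cast
        nlinarith
  -- Claim B : lower-type bound
  have hB : ∀ n : ℕ, ∀ x y : X, dist (f x) (f y) < n * (r / 10) →
      dist x y ≤ dist (f x) (f y) + (4 * n + 1) * δ := by
    intro n
    induction n with
    | zero =>
      intro x y h
      norm_num at h
      linarith [dist_nonneg (x := f x) (y := f y)]
    | succ n ih =>
      intro x y h
      have hn0 : (0:ℝ) ≤ (n:ℝ) := n.cast_nonneg
      by_cases hcase : dist (f x) (f y) < r
      · have hm := abs_lt.mp (hloc x y (min_lt_iff.mpr (Or.inr hcase)))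
        push_cast
        nlinarith [hm.1]
      · push_neg at hcase
        obtain ⟨N, c, hN1, hc0, hcN, hstep, hstr⟩ := hY (f x) (f y)
        have h0 : dist (f x) (c 0) < r / 2 := by rw [hc0, dist_self]; linarith
        have hN' : r / 2 + δ ≤ dist (f x) (c N) := by rw [hcN]; linarith
        obtain ⟨i, hi0, hiN, hti, htub⟩ := exists_cross c (f x) N (r / 2) δ hδ h0 hN' hstep
        have hstr' := hstr 0 i N hi0 hiN le_rfl
        rw [hc0, hcN] at hstr'
        obtain ⟨z, hz⟩ := hnet (c i)
        have hfxz2 : dist (f x) (f z) ≤ dist (f x) (c i) + δ := by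
          calc dist (f x) (f z) ≤ dist (f x) (c i) + dist (c i) (f z) := dist_triangle _ _ _
          _ ≤ _ := by rw [dist_comm (c i) (f z)]; linarith
        have hfxz : dist (f x) (f z) < r := by linarith
        have hxz : dist x z < dist (f x) (f z) + δ := by
          have := abs_lt.mp (hloc x z (min_lt_iff.mpr (Or.inr hfxz)))
          linarith [this.1]
        have hfzy : dist (f z) (f y) ≤ dist (c i) (f y) + δ := by
          calc dist (f z) (f y) ≤ dist (f z) (c i) + dist (c i) (f y) := dist_triangle _ _ _
          _ ≤ _ := by linarith
        have hzy_small : dist (f z) (f y) < n * (r / 10) := by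
          have hn : dist (f x) (f y) < ((n:ℝ) + 1) * (r / 10) := by push_cast at h; linarith
          linarith
        have hih := ih z y hzy_small
        have htri := dist_triangle x z y
        push_cast
        nlinarith
  refine ⟨?_, ?_⟩
  · intro y
    obtain ⟨x, hx⟩ := hnet y
    exact ⟨x, by nlinarith⟩
  · intro x y
    have hd : (0:ℝ) ≤ dist x y := dist_nonneg
    have he : (0:ℝ) ≤ dist (f x) (f y) := dist_nonneg
    have hrinv : (0:ℝ) ≤ r⁻¹ := inv_nonneg.mpr hrpos.le
    constructor
    · -- lower bound
      set e := dist (f x) (f y) with hee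
      have h1 : 10 * e / r < (⌊10 * e / r⌋₊ : ℝ) + 1 := Nat.lt_floor_add_one _
      have h2 : 10 * e < ((⌊10 * e / r⌋₊ : ℝ) + 1) * r := by
        rw [div_lt_iff₀ hrpos] at h1; linarith
      have hlt : e < (↑(⌊10 * e / r⌋₊ + 1) : ℝ) * (r / 10) := by
        push_cast; linarith
      have hBn := hB (⌊10 * e / r⌋₊ + 1) x y hlt
      have hnle : ((⌊10 * e / r⌋₊ + 1 : ℕ) : ℝ) ≤ 10 * e / r + 1 := by
        push_cast
        exact add_le_add_left (Nat.floor_le (by positivity)) 1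
      have key : dist x y ≤ (1 + 100 * r⁻¹ * δ) * e + 5 * δ := by
        push_cast at hBn
        have hmul : ((⌊10 * e / r⌋₊ : ℝ) + 1) * δ ≤ (10 * e / r + 1) * δ := by
          push_cast at hnle
          nlinarith
        have herd : (0:ℝ) ≤ e * r⁻¹ * δ := by positivity
        have hdiv : 10 * e / r * δ = 10 * (e * r⁻¹ * δ) := by ring
        nlinarith
      have hapos : (0:ℝ) < 1 + 100 * r⁻¹ * δ := by positivity
      have hkey2 : (1 + 100 * r⁻¹ * δ)⁻¹ * dist x y ≤ e + 5 * δ := by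
        rw [inv_mul_le_iff₀ hapos]
        have : (0:ℝ) ≤ 100 * r⁻¹ * δ * (5 * δ) := by positivity
        nlinarith
      linarith
    · -- upper bound
      set d := dist x y with hdd
      have h1 : 10 * d / r < (⌊10 * d / r⌋₊ : ℝ) + 1 := Nat.lt_floor_add_one _
      have h2 : 10 * d < ((⌊10 * d / r⌋₊ : ℝ) + 1) * r := by
        rw [div_lt_iff₀ hrpos] at h1; linarith
      have hlt : d < (↑(⌊10 * d / r⌋₊ + 1) : ℝ) * (r / 10) := by
        push_cast; linarith
      have hAn := hA (⌊10 * d / r⌋₊ + 1) x y hlt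
      have hnle : ((⌊10 * d / r⌋₊ : ℝ)) ≤ 10 * d / r := Nat.floor_le (by positivity)
      push_cast at hAn
      have hmul : ((⌊10 * d / r⌋₊ : ℝ) + 1) * δ ≤ (10 * d / r + 1) * δ := by nlinarith
      have herd : (0:ℝ) ≤ d * r⁻¹ * δ := by positivity
      have hdiv : 10 * d / r * δ = 10 * (d * r⁻¹ * δ) := by ring
      nlinarith
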